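/- Let M and M' be ℚ-vector spaces, ν : M → ℚ a ℚ-linear functional, φ : M → M' a ℚ-linear map, and q ≥ 1. Let M₀ ⊆ M and M₀' ⊆ M' be ℚ-linear subspaces such that for every f ∈ M₀ with ν(f) = 0 one has φ(f) ∈ M₀'. Then Res_{ν,φ} maps the image of the canonical map ⋀^q M₀ → ⋀^q M into the image of the canonical map ⋀^{q−1} M₀' → ⋀^{q−1} M'. In other words, for every ω in the subspace of ⋀^q M spanned by wedges f₁ ∧ ⋯ ∧ f_q with all f_i ∈ M₀, the element Res_{ν,φ}(ω) lies in the subspace of ⋀^{q−1} M' spanned by wedges of elements of M₀'. -/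
import Mathlib


open ExteriorAlgebra

/-- Adding multiples of the `i₀`-th entry to the other entries does not change the value
of an alternating map. -/
lemma alt_elim {m : ℕ} {M N : Type*} [AddCommGroup M] [Module ℚ M] [AddCommGroup N]
    [Module ℚ N] (g : M [⋀^Fin m]→ₗ[ℚ] N) (f : Fin m → M) (i₀ : Fin m) (c : Fin m → ℚ) :
    g (fun i => if i = i₀ then f i₀ else f i - c i • f i₀) = g f := by
  have key : ∀ s : Finset (Fin m),
      g (fun i => if i ∈ s ∧ i ≠ i₀ then f i - c i • f i₀ else f i) = g f := by
    intro s
    induction s using Finset.induction_on with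
    | empty => simp
    | @insert a s ha ih =>
      by_cases hai : a = i₀
      · rw [← ih]; congr 1; funext i
        subst hai
        by_cases hia : i = a <;> simp [Finset.mem_insert, hia]
      · set F : Fin m → M := fun i => if i ∈ s ∧ i ≠ i₀ then f i - c i • f i₀ else f i with hFdef
        have hF : (fun i => if i ∈ insert a s ∧ i ≠ i₀ then f i - c i • f i₀ else f i)
            = Function.update F a (f a - c a • f i₀) := by
          funext i
          by_cases hia : i = a
          · subst hia; rw [Function.update_self]; simp [hai]
          · rw [Function.update_of_ne hia]; simp [hFdef, Finset.mem_insert, hia]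
        have hFa : F a = f a := by simp [hFdef, ha]
        have hFi₀ : F i₀ = f i₀ := by simp [hFdef]
        rw [hF, g.map_update_sub, g.map_update_smul, ← hFa, Function.update_eq_self,
          ← hFi₀, g.map_update_self _ hai, smul_zero, sub_zero, ih]
  rw [← key Finset.univ]
  congr 1; funext i
  by_cases hi : i = i₀ <;> simp [hi]

/-- The wedge `f 0 ∧ ⋯ ∧ f (q-1)` as an element of the `q`-th exterior power
of a `ℚ`-vector space. -/
noncomputable def wedge {M : Type*} [AddCommGroup M] [Module ℚ M] (q : ℕ) (f : Fin q → M) :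
    ⋀[ℚ]^q M :=
  ⟨ExteriorAlgebra.ιMulti ℚ q f, ExteriorAlgebra.ιMulti_range ℚ q ⟨f, rfl⟩⟩

/-- `R : ⋀^{n+1} M → ⋀^n M'` is the residue map `Res_{ν,φ}` iff it takes the defining
values on wedges. -/
def IsResMap {M M' : Type*} [AddCommGroup M] [Module ℚ M] [AddCommGroup M'] [Module ℚ M']
    (n : ℕ) (ν : M →ₗ[ℚ] ℚ) (φ : M →ₗ[ℚ] M')
    (R : (⋀[ℚ]^(n + 1) M) →ₗ[ℚ] (⋀[ℚ]^n M')) : Prop :=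
  ∀ f : Fin (n + 1) → M,
    R (wedge (n + 1) f) =
      ∑ i : Fin (n + 1), ((-1 : ℚ) ^ (i : ℕ) * ν (f i)) •
        wedge n (fun j => φ (f (i.succAbove j)))

/-- if every `f ∈ M₀` with `ν f = 0` satisfies `φ f ∈ M₀'`, then the residue
map `Res_{ν,φ}` maps the subspace of `⋀^{n+1} M` spanned by wedges of elements of `M₀` into
the subspace of `⋀^n M'` spanned by wedges of elements of `M₀'`. -/
theorem statement_1 {M M' : Type*} [AddCommGroup M] [Module ℚ M]
    [AddCommGroup M'] [Module ℚ M']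
    (ν : M →ₗ[ℚ] ℚ) (φ : M →ₗ[ℚ] M') (n : ℕ)
    (R : (⋀[ℚ]^(n + 1) M) →ₗ[ℚ] (⋀[ℚ]^n M')) (hR : IsResMap n ν φ R)
    (M₀ : Submodule ℚ M) (M₀' : Submodule ℚ M')
    (h : ∀ f ∈ M₀, ν f = 0 → φ f ∈ M₀') :
    ∀ ω ∈ Submodule.span ℚ
        {x : ⋀[ℚ]^(n + 1) M | ∃ f : Fin (n + 1) → M,
          (∀ i, f i ∈ M₀) ∧ x = wedge (n + 1) f},
      R ω ∈ Submodule.span ℚ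
        {y : ⋀[ℚ]^n M' | ∃ g : Fin n → M',
          (∀ j, g j ∈ M₀') ∧ y = wedge n g} := by
  intro ω hω
  induction hω using Submodule.span_induction with
  | zero => simp only [map_zero]; exact Submodule.zero_mem _
  | add x y hx hy ihx ihy => rw [map_add]; exact Submodule.add_mem _ ihx ihy
  | smul a x hx ihx => rw [map_smul]; exact Submodule.smul_mem _ a ihx
  | mem x hx =>
    obtain ⟨f, hf, rfl⟩ := hx
    by_cases hall : ∀ i, ν (f i) = 0
    · rw [hR f]
      refine Submodule.sum_mem _ fun i _ => Submodule.smul_mem _ _ (Submodule.subset_span ?_)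
      exact ⟨fun j => φ (f (i.succAbove j)),
        fun j => h _ (hf _) (hall _), rfl⟩
    · push_neg at hall
      obtain ⟨i₀, hi₀⟩ := hall
      set c : Fin (n + 1) → ℚ := fun i => ν (f i) / ν (f i₀) with hc
      set f' : Fin (n + 1) → M := fun i => if i = i₀ then f i₀ else f i - c i • f i₀ with hf'
      have hwe : wedge (n + 1) f = wedge (n + 1) f' := by
        apply Subtype.ext
        exact (alt_elim (ExteriorAlgebra.ιMulti ℚ (n + 1)) f i₀ c).symm
      rw [hwe, hR f']
      refine Submodule.sum_mem _ fun i _ => ?_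
      by_cases hi : i = i₀
      · rw [hi]
        refine Submodule.smul_mem _ _ (Submodule.subset_span ?_)
        refine ⟨fun j => φ (f' (i₀.succAbove j)), fun j => ?_, rfl⟩
        have hne : i₀.succAbove j ≠ i₀ := Fin.succAbove_ne i₀ j
        have hval : f' (i₀.succAbove j) = f (i₀.succAbove j) - c (i₀.succAbove j) • f i₀ := by
          simp [hf', hne]
        refine h _ ?_ ?_
        · rw [hval]; exact M₀.sub_mem (hf _) (M₀.smul_mem _ (hf _))
        · rw [hval, map_sub, map_smul, hc, smul_eq_mul, div_mul_cancel₀ _ hi₀, sub_self]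
      · have hz : ν (f' i) = 0 := by
          simp only [hf', if_neg hi, map_sub, map_smul, hc, smul_eq_mul]
          rw [div_mul_cancel₀ _ hi₀, sub_self]
        rw [hz, mul_zero, zero_smul]
        exact Submodule.zero_mem _
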